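/- (Maximum of the transient amplification envelope, complex eigenvalues.) Let a < 0 < b be real numbers and set t* = (1/b)·arctan(−b/a). Then 0 < t* < π/(2b) and for all t ≥ 0, e^{a·t}·|sin(b·t)| ≤ e^{a·t*}·sin(b·t*). -/

import Mathlib

open Real Set

lemma env_sin_arctan (c : ℝ) (hc : c < 0) :
    Real.sin (Real.arctan (-1/c)) = 1 / Real.sqrt (1 + c^2) ∧
    Real.cos (Real.arctan (-1/c)) = -c / Real.sqrt (1 + c^2) := by
  have hc0 : c ≠ 0 := hc.ne
  have hpos : (0:ℝ) < 1 + c^2 := by positivity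
  have h1 : 1 + (-1/c)^2 = (1 + c^2) / c^2 := by field_simp; ring
  have hs : Real.sqrt (1 + (-1/c)^2) = Real.sqrt (1 + c^2) / (-c) := by
    rw [h1, Real.sqrt_div hpos.le, Real.sqrt_sq_eq_abs, abs_of_neg hc]
  have hsp : (0:ℝ) < Real.sqrt (1 + c^2) := Real.sqrt_pos.2 hpos
  constructor
  · rw [Real.sin_arctan, hs]; field_simp
  · rw [Real.cos_arctan, hs]; field_simp

/-- key identity: cos θ + c sin θ = √(1+c²) · sin (θ* − θ). -/
lemma env_identity (c : ℝ) (hc : c < 0) (θ : ℝ) :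
    Real.cos θ + c * Real.sin θ
      = Real.sqrt (1 + c^2) * Real.sin (Real.arctan (-1/c) - θ) := by
  obtain ⟨hsin, hcos⟩ := env_sin_arctan c hc
  have hsp : (0:ℝ) < Real.sqrt (1 + c^2) := Real.sqrt_pos.2 (by positivity)
  rw [Real.sin_sub, hsin, hcos]
  field_simp
  ring

lemma env_deriv (c θ : ℝ) :
    HasDerivAt (fun x => Real.exp (c*x) * Real.sin x)
      (Real.exp (c*θ) * (c * Real.sin θ + Real.cos θ)) θ := by
  have h1 : HasDerivAt (fun x => Real.exp (c*x)) (Real.exp (c*θ) * c) θ := by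
    simpa [Function.comp_def] using (Real.hasDerivAt_exp (c*θ)).comp θ ((hasDerivAt_id θ).const_mul c)
  have := h1.mul (Real.hasDerivAt_sin θ)
  exact this.congr_deriv (by ring)

/-- maximum over one half-period -/
lemma env_max_on_period (c : ℝ) (hc : c < 0) (θ : ℝ) (h0 : 0 ≤ θ) (hπ : θ ≤ π) :
    Real.exp (c*θ) * Real.sin θ
      ≤ Real.exp (c * Real.arctan (-1/c)) * Real.sin (Real.arctan (-1/c)) := by
  set θs := Real.arctan (-1/c) with hθs
  have hcc : (0:ℝ) < -1/c := by
    rw [neg_div]; exact neg_pos.2 (one_div_neg.2 hc)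
  have hθs0 : 0 < θs := by
    rw [hθs, ← Real.arctan_zero]
    exact Real.arctan_strictMono hcc
  have hθs2 : θs < π/2 := Real.arctan_lt_pi_div_two _
  set f : ℝ → ℝ := fun x => Real.exp (c*x) * Real.sin x with hf
  have hdiff : ∀ x : ℝ, HasDerivAt f (Real.exp (c*x) * (c * Real.sin x + Real.cos x)) x :=
    fun x => env_deriv c x
  have hderiv : ∀ x : ℝ, deriv f x = Real.exp (c*x) * Real.sqrt (1 + c^2) * Real.sin (θs - x) := by
    intro x
    rw [(hdiff x).deriv]
    have := env_identity c hc x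
    rw [add_comm (c * Real.sin x), this]
    ring
  have hcont : Continuous f := by fun_prop
  have hdf : Differentiable ℝ f := fun x => (hdiff x).differentiableAt
  rcases le_total θ θs with hle | hle
  · -- monotone on [0, θs]
    have hmono : MonotoneOn f (Icc 0 θs) := by
      apply monotoneOn_of_deriv_nonneg (convex_Icc _ _) hcont.continuousOn
        (hdf.differentiableOn)
      intro x hx
      rw [interior_Icc] at hx
      rw [hderiv]
      have h1 : 0 ≤ Real.sin (θs - x) := by
        apply Real.sin_nonneg_of_nonneg_of_le_pi
        · linarith [hx.2]
        · nlinarith [Real.pi_gt_three, hx.1]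
      positivity
    exact hmono ⟨h0, hle⟩ ⟨hθs0.le, le_refl _⟩ hle
  · have hanti : AntitoneOn f (Icc θs π) := by
      apply antitoneOn_of_deriv_nonpos (convex_Icc _ _) hcont.continuousOn
        (hdf.differentiableOn)
      intro x hx
      rw [interior_Icc] at hx
      rw [hderiv]
      have h1 : Real.sin (θs - x) ≤ 0 := by
        rw [show θs - x = -(x - θs) by ring, Real.sin_neg, neg_nonpos]
        apply Real.sin_nonneg_of_nonneg_of_le_pi
        · linarith [hx.1]
        · linarith [hx.2, Real.pi_pos]
      have h2 : (0:ℝ) < Real.exp (c*x) * Real.sqrt (1+c^2) := by positivity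
      nlinarith
    exact hanti ⟨le_refl _, by linarith⟩ ⟨hle, hπ⟩ hle

/-- main estimate for all θ ≥ 0 -/
lemma env_max (c : ℝ) (hc : c < 0) (θ : ℝ) (h0 : 0 ≤ θ) :
    Real.exp (c*θ) * |Real.sin θ|
      ≤ Real.exp (c * Real.arctan (-1/c)) * Real.sin (Real.arctan (-1/c)) := by
  have hπ : (0:ℝ) < π := Real.pi_pos
  set n : ℤ := ⌊θ / π⌋ with hn
  have hn0 : 0 ≤ n := Int.le_floor.2 (by push_cast; positivity)
  set θ0 : ℝ := θ - n * π with hθ0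
  have h00 : 0 ≤ θ0 := by
    have := (le_div_iff₀ hπ).1 (Int.floor_le (θ / π))
    rw [hθ0]; linarith
  have h0π : θ0 ≤ π := by
    have := (div_lt_iff₀ hπ).1 (Int.lt_floor_add_one (θ / π))
    rw [hθ0]; nlinarith
  have hsin : |Real.sin θ| = Real.sin θ0 := by
    have : Real.sin θ = (-1)^n * Real.sin θ0 := by
      rw [← Real.sin_add_int_mul_pi θ0 n, hθ0]; ring_nf
    rw [this, abs_mul]
    rw [abs_of_nonneg (Real.sin_nonneg_of_nonneg_of_le_pi h00 h0π)]
    rcases Int.even_or_odd n with he | he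
    · rw [he.neg_one_zpow]; simp
    · rw [Odd.neg_one_zpow he]; simp
  have hexp : Real.exp (c*θ) ≤ Real.exp (c*θ0) := by
    apply Real.exp_le_exp.2
    have : θ0 ≤ θ := by
      rw [hθ0]
      have : (0:ℝ) ≤ n * π := mul_nonneg (by exact_mod_cast hn0) hπ.le
      linarith
    nlinarith
  calc Real.exp (c*θ) * |Real.sin θ| = Real.exp (c*θ) * Real.sin θ0 := by rw [hsin]
    _ ≤ Real.exp (c*θ0) * Real.sin θ0 := by
        apply mul_le_mul_of_nonneg_right hexp (Real.sin_nonneg_of_nonneg_of_le_pi h00 h0π)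
    _ ≤ _ := env_max_on_period c hc θ0 h00 h0π

theorem envelope_max_complex_eigenvalues (a b : ℝ) (ha : a < 0) (hb : 0 < b) :
    let tstar := (1 / b) * Real.arctan (-b / a)
    0 < tstar ∧ tstar < Real.pi / (2 * b) ∧
      ∀ t : ℝ, 0 ≤ t →
        Real.exp (a * t) * |Real.sin (b * t)| ≤
          Real.exp (a * tstar) * Real.sin (b * tstar) := by
  intro tstar
  have hb0 : b ≠ 0 := hb.ne'
  have ha0 : a ≠ 0 := ha.ne
  set c : ℝ := a / b with hcdef
  have hc : c < 0 := div_neg_of_neg_of_pos ha hb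
  have harg : -b / a = -1/c := by
    rw [hcdef]; field_simp
  have hba : (0:ℝ) < -b/a := by
    rw [neg_div]; exact neg_pos.2 (div_neg_of_pos_of_neg hb ha)
  have hθpos : 0 < Real.arctan (-b/a) := by
    rw [← Real.arctan_zero]
    exact Real.arctan_strictMono hba
  have hθlt : Real.arctan (-b/a) < π/2 := Real.arctan_lt_pi_div_two _
  refine ⟨by positivity, ?_, ?_⟩
  · rw [show π / (2*b) = (1/b) * (π/2) by ring]
    exact (mul_lt_mul_iff_right₀ (by positivity)).2 hθlt
  · intro t ht
    have key := env_max c hc (b*t) (by positivity)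
    have e1 : c * (b*t) = a * t := by rw [hcdef]; field_simp
    have e2 : c * Real.arctan (-1/c) = a * tstar := by
      rw [← harg, hcdef, show tstar = (1/b) * Real.arctan (-b/a) from rfl]
      field_simp
    have e3 : Real.arctan (-1/c) = b * tstar := by
      rw [← harg, show tstar = (1/b) * Real.arctan (-b/a) from rfl]
      field_simp
    rw [e1, e2, e3] at key
    exact key
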